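/- Let E be a Fréchet space and G a Lie group with length function |·|_G. Suppose π: G → L(E) is a representation such that for each v ∈ E and each continuous seminorm p on E there exists λ > 0 with sup_{g∈G} e^{-λ|g|_G} p(π(g)v) < ∞. Then for each continuous seminorm p on E there exist constants C, λ > 0 and a continuous seminorm q on E such that p(π(g)v) ≤ C e^{λ|g|_G} q(v) for all v ∈ E and g ∈ G. -/

import Mathlib

open scoped Uniformity Topology

section Stmt0Aux

variable {E : Type*} [AddCommGroup E] [Module ℝ E] [TopologicalSpace E]
  {G : Type*} [Group G]

/-- Auxiliary predicate: the orbit of `v` is exponentially bounded with rate `lam`. -/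
def ExpBdd (ℓ : G → ℝ) (π : G →* (E →L[ℝ] E)) (p : Seminorm ℝ E) (lam : ℝ) (v : E) : Prop :=
  ∃ M : ℝ, 0 ≤ M ∧ ∀ g : G, p (π g v) ≤ M * Real.exp (lam * ℓ g)

/-- One-sided (nonnegative length) exponential bound. -/
def ExpBddPos (ℓ : G → ℝ) (π : G →* (E →L[ℝ] E)) (p : Seminorm ℝ E) (lam : ℝ) (v : E) : Prop :=
  ∃ M : ℝ, 0 ≤ M ∧ ∀ g : G, 0 ≤ ℓ g → p (π g v) ≤ M * Real.exp (lam * ℓ g)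

/-- One-sided (nonpositive length) exponential bound. -/
def ExpBddNeg (ℓ : G → ℝ) (π : G →* (E →L[ℝ] E)) (p : Seminorm ℝ E) (lam : ℝ) (v : E) : Prop :=
  ∃ M : ℝ, 0 ≤ M ∧ ∀ g : G, ℓ g ≤ 0 → p (π g v) ≤ M * Real.exp (lam * ℓ g)

variable {ℓ : G → ℝ} {π : G →* (E →L[ℝ] E)} {p : Seminorm ℝ E} {lam lam' μ ν : ℝ} {v w u : E}

theorem ExpBdd.pos (h : ExpBdd ℓ π p lam v) : ExpBddPos ℓ π p lam v := by
  obtain ⟨M, hM, h⟩ := h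
  exact ⟨M, hM, fun g _ => h g⟩

theorem ExpBdd.neg (h : ExpBdd ℓ π p lam v) : ExpBddNeg ℓ π p lam v := by
  obtain ⟨M, hM, h⟩ := h
  exact ⟨M, hM, fun g _ => h g⟩

theorem ExpBddPos.mono (h : ExpBddPos ℓ π p lam v) (hle : lam ≤ lam') :
    ExpBddPos ℓ π p lam' v := by
  obtain ⟨M, hM, h⟩ := h
  refine ⟨M, hM, fun g hg => (h g hg).trans ?_⟩
  have : Real.exp (lam * ℓ g) ≤ Real.exp (lam' * ℓ g) :=
    Real.exp_le_exp.2 (mul_le_mul_of_nonneg_right hle hg)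
  exact mul_le_mul_of_nonneg_left this hM

theorem ExpBddNeg.mono (h : ExpBddNeg ℓ π p lam v) (hle : lam' ≤ lam) :
    ExpBddNeg ℓ π p lam' v := by
  obtain ⟨M, hM, h⟩ := h
  refine ⟨M, hM, fun g hg => (h g hg).trans ?_⟩
  have : Real.exp (lam * ℓ g) ≤ Real.exp (lam' * ℓ g) :=
    Real.exp_le_exp.2 (mul_le_mul_of_nonpos_right hle hg)
  exact mul_le_mul_of_nonneg_left this hM

theorem ExpBddPos.sub (h1 : ExpBddPos ℓ π p lam u) (h2 : ExpBddPos ℓ π p lam w) :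
    ExpBddPos ℓ π p lam (u - w) := by
  obtain ⟨M1, hM1, h1⟩ := h1
  obtain ⟨M2, hM2, h2⟩ := h2
  refine ⟨M1 + M2, by positivity, fun g hg => ?_⟩
  have : (π g) (u - w) = (π g) u - (π g) w := map_sub _ _ _
  calc p ((π g) (u - w)) = p ((π g) u - (π g) w) := by rw [this]
    _ ≤ p ((π g) u) + p ((π g) w) := map_sub_le_add p _ _
    _ ≤ M1 * Real.exp (lam * ℓ g) + M2 * Real.exp (lam * ℓ g) := add_le_add (h1 g hg) (h2 g hg)
    _ = (M1 + M2) * Real.exp (lam * ℓ g) := by ring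

theorem ExpBddNeg.sub (h1 : ExpBddNeg ℓ π p lam u) (h2 : ExpBddNeg ℓ π p lam w) :
    ExpBddNeg ℓ π p lam (u - w) := by
  obtain ⟨M1, hM1, h1⟩ := h1
  obtain ⟨M2, hM2, h2⟩ := h2
  refine ⟨M1 + M2, by positivity, fun g hg => ?_⟩
  have : (π g) (u - w) = (π g) u - (π g) w := map_sub _ _ _
  calc p ((π g) (u - w)) = p ((π g) u - (π g) w) := by rw [this]
    _ ≤ p ((π g) u) + p ((π g) w) := map_sub_le_add p _ _
    _ ≤ M1 * Real.exp (lam * ℓ g) + M2 * Real.exp (lam * ℓ g) := add_le_add (h1 g hg) (h2 g hg)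
    _ = (M1 + M2) * Real.exp (lam * ℓ g) := by ring

theorem ExpBddPos.combine (h1 : ExpBddPos ℓ π p lam v) (h2 : ExpBddNeg ℓ π p lam v) :
    ExpBdd ℓ π p lam v := by
  obtain ⟨M1, hM1, h1⟩ := h1
  obtain ⟨M2, hM2, h2⟩ := h2
  refine ⟨max M1 M2, le_max_of_le_left hM1, fun g => ?_⟩
  rcases le_total 0 (ℓ g) with hg | hg
  · exact (h1 g hg).trans
      (mul_le_mul_of_nonneg_right (le_max_left _ _) (Real.exp_nonneg _))
  · exact (h2 g hg).trans
      (mul_le_mul_of_nonneg_right (le_max_right _ _) (Real.exp_nonneg _))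

/-- Convexity of the set of admissible rates. -/
theorem ExpBdd.between (h1 : ExpBdd ℓ π p lam v) (h2 : ExpBdd ℓ π p lam' v)
    (ha : lam ≤ ν) (hb : ν ≤ lam') : ExpBdd ℓ π p ν v :=
  (h1.pos.mono ha).combine (h2.neg.mono hb)

/-- Key pairwise intersection lemma: two vectors always admit a common rate. -/
theorem expBdd_pair_le (h12 : lam ≤ lam') (h1 : ExpBdd ℓ π p lam v)
    (h2 : ExpBdd ℓ π p lam' w) (h3 : ExpBdd ℓ π p μ (v + w)) :
    ∃ ν, lam ≤ ν ∧ ExpBdd ℓ π p ν v ∧ ExpBdd ℓ π p ν w := by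
  rcases le_total μ lam with hμ | hμ
  · refine ⟨lam, le_rfl, h1, ?_⟩
    have hw_pos : ExpBddPos ℓ π p lam ((v + w) - v) := ((h3.pos.mono hμ).sub h1.pos)
    have hw_pos' : ExpBddPos ℓ π p lam w := by
      rwa [add_sub_cancel_left] at hw_pos
    exact hw_pos'.combine (h2.neg.mono h12)
  rcases le_total μ lam' with hμ₂ | hμ₂
  · refine ⟨μ, hμ, ?_, ?_⟩
    · have hv_neg : ExpBddNeg ℓ π p μ ((v + w) - w) := h3.neg.sub (h2.neg.mono hμ₂)
      have hv_neg' : ExpBddNeg ℓ π p μ v := by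
        rwa [add_sub_cancel_right] at hv_neg
      exact (h1.pos.mono hμ).combine hv_neg'
    · have hw_pos : ExpBddPos ℓ π p μ ((v + w) - v) := h3.pos.sub (h1.pos.mono hμ)
      have hw_pos' : ExpBddPos ℓ π p μ w := by
        rwa [add_sub_cancel_left] at hw_pos
      exact hw_pos'.combine (h2.neg.mono hμ₂)
  · refine ⟨lam', h12, ?_, h2⟩
    have hv_neg : ExpBddNeg ℓ π p lam' ((v + w) - w) := (h3.neg.mono hμ₂).sub h2.neg
    have hv_neg' : ExpBddNeg ℓ π p lam' v := by
      rwa [add_sub_cancel_right] at hv_neg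
    exact (h1.pos.mono h12).combine hv_neg'

theorem expBdd_pair {lam₁ lam₂ : ℝ} (h1 : ExpBdd ℓ π p lam₁ v) (h2 : ExpBdd ℓ π p lam₂ w)
    (h3 : ExpBdd ℓ π p μ (v + w)) :
    ∃ ν, min lam₁ lam₂ ≤ ν ∧ ExpBdd ℓ π p ν v ∧ ExpBdd ℓ π p ν w := by
  rcases le_total lam₁ lam₂ with h12 | h12
  · obtain ⟨ν, hν, hv, hw⟩ := expBdd_pair_le h12 h1 h2 h3
    exact ⟨ν, (min_le_left _ _).trans hν, hv, hw⟩
  · obtain ⟨ν, hν, hw, hv⟩ := expBdd_pair_le h12 h2 h1 (by rwa [add_comm] at h3)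
    exact ⟨ν, (min_le_right _ _).trans hν, hv, hw⟩

end Stmt0Aux

/-- The Baire category step: if a countable set of positive rates covers all vectors,
then some rate works uniformly. -/
theorem stmt0_baire
    {E : Type*} [AddCommGroup E] [Module ℝ E] [UniformSpace E] [IsUniformAddGroup E]
    [ContinuousSMul ℝ E] [CompleteSpace E]
    [TopologicalSpace.MetrizableSpace E]
    {G : Type*} [Group G] (ℓ : G → ℝ)
    (π : G →* (E →L[ℝ] E))
    (p : Seminorm ℝ E) (hp : Continuous p)
    (D : Set ℝ) (hDc : D.Countable) (hDpos : ∀ lam ∈ D, 0 < lam)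
    (hcov : ∀ v : E, ∃ lam ∈ D, ExpBdd ℓ π p lam v) :
    ∃ C > 0, ∃ lam > 0, ∃ q : Seminorm ℝ E, Continuous q ∧
      ∀ (v : E) (g : G), p (π g v) ≤ C * Real.exp (lam * ℓ g) * q v := by
  haveI : (𝓤 E).IsCountablyGenerated := IsUniformAddGroup.uniformity_countably_generated
  haveI : Countable ↥D := hDc.to_subtype
  set F : ↥D × ℕ → Set E := fun i =>
    ⋂ g : G, {v : E | p ((π g) v) ≤ (i.2 : ℝ) * Real.exp ((i.1 : ℝ) * ℓ g)} with hF
  have hclosed : ∀ i, IsClosed (F i) := by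
    intro i
    refine isClosed_iInter fun g => ?_
    exact isClosed_le (hp.comp (π g).continuous) continuous_const
  have hcover : (⋃ i, F i) = Set.univ := by
    refine Set.eq_univ_iff_forall.2 fun v => ?_
    obtain ⟨lam, hmem, M, _, hM⟩ := hcov v
    obtain ⟨n, hn⟩ := exists_nat_ge M
    refine Set.mem_iUnion.2 ⟨(⟨lam, hmem⟩, n), Set.mem_iInter.2 fun g => ?_⟩
    exact (hM g).trans (mul_le_mul_of_nonneg_right hn (Real.exp_nonneg _))
  obtain ⟨i, v₀, hv₀⟩ := nonempty_interior_of_iUnion_of_closed hclosed hcover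
  set lam : ℝ := (i.1 : ℝ) with hlam
  set n : ℕ := i.2 with hn
  have hlampos : 0 < lam := hDpos _ i.1.2
  have hmemF : ∀ v ∈ F i, ∀ g : G, p ((π g) v) ≤ (n : ℝ) * Real.exp (lam * ℓ g) := by
    intro v hv g
    exact Set.mem_iInter.1 hv g
  have hconv : Convex ℝ (F i) := by
    refine convex_iInter fun g => ?_
    intro x hx y hy a b ha hb hab
    simp only [Set.mem_setOf_eq] at hx hy ⊢
    have hmap : (π g) (a • x + b • y) = a • (π g) x + b • (π g) y := by
      rw [map_add, map_smul, map_smul]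
    rw [hmap]
    calc p (a • (π g) x + b • (π g) y)
        ≤ p (a • (π g) x) + p (b • (π g) y) := map_add_le_add p _ _
      _ = a * p ((π g) x) + b * p ((π g) y) := by
          rw [map_smul_eq_mul, map_smul_eq_mul, Real.norm_eq_abs, Real.norm_eq_abs,
            abs_of_nonneg ha, abs_of_nonneg hb]
      _ ≤ a * ((n : ℝ) * Real.exp (lam * ℓ g)) + b * ((n : ℝ) * Real.exp (lam * ℓ g)) :=
          add_le_add (mul_le_mul_of_nonneg_left hx ha) (mul_le_mul_of_nonneg_left hy hb)
      _ = (a + b) * ((n : ℝ) * Real.exp (lam * ℓ g)) := by ring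
      _ = (n : ℝ) * Real.exp (lam * ℓ g) := by rw [hab, one_mul]
  have hbal : Balanced ℝ (F i) := by
    intro a ha
    intro x hx
    obtain ⟨y, hy, rfl⟩ := hx
    refine Set.mem_iInter.2 fun g => ?_
    have hmap : (π g) (a • y) = a • (π g) y := map_smul _ _ _
    simp only [Set.mem_setOf_eq, hmap, map_smul_eq_mul]
    calc ‖a‖ * p ((π g) y) ≤ 1 * p ((π g) y) :=
          mul_le_mul_of_nonneg_right ha (apply_nonneg p _)
      _ = p ((π g) y) := one_mul _
      _ ≤ (n : ℝ) * Real.exp (lam * ℓ g) := hmemF y hy g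
  have hv₀F : v₀ ∈ F i := interior_subset hv₀
  have hnegv₀ : -v₀ ∈ F i := by
    refine Set.mem_iInter.2 fun g => ?_
    have : (π g) (-v₀) = -((π g) v₀) := map_neg _ _
    simp only [Set.mem_setOf_eq, this, map_neg_eq_map]
    exact hmemF v₀ hv₀F g
  have h0 : (0 : E) ∈ interior (F i) := by
    have := hconv.combo_interior_self_mem_interior hv₀ hnegv₀ (one_half_pos (α := ℝ))
      (by norm_num : (0:ℝ) ≤ 1/2) (by norm_num)
    rwa [smul_neg, add_neg_cancel] at this
  have hnhds : F i ∈ nhds (0 : E) := mem_interior_iff_mem_nhds.1 h0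
  have habs : Absorbent ℝ (F i) := absorbent_nhds_zero hnhds
  refine ⟨(n : ℝ) + 1, by positivity, lam, hlampos, gaugeSeminorm hbal hconv habs, ?_, ?_⟩
  · have : ⇑(gaugeSeminorm hbal hconv habs) = gauge (F i) := rfl
    rw [this]
    exact continuous_gauge hconv hnhds
  · intro v g
    have key : ∀ t : ℝ, gauge (F i) v < t →
        p ((π g) v) ≤ (n : ℝ) * Real.exp (lam * ℓ g) * t := by
      intro t ht
      obtain ⟨b, hb0, hbt, hmem⟩ := exists_lt_of_gauge_lt habs ht
      obtain ⟨y, hy, rfl⟩ := hmem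
      have hmap : (π g) (b • y) = b • (π g) y := map_smul _ _ _
      have : p ((π g) (b • y)) = b * p ((π g) y) := by
        rw [hmap, map_smul_eq_mul, Real.norm_eq_abs, abs_of_nonneg hb0.le]
      rw [this]
      calc b * p ((π g) y) ≤ b * ((n : ℝ) * Real.exp (lam * ℓ g)) :=
            mul_le_mul_of_nonneg_left (hmemF y hy g) hb0.le
        _ ≤ t * ((n : ℝ) * Real.exp (lam * ℓ g)) :=
            mul_le_mul_of_nonneg_right hbt.le (by positivity)
        _ = (n : ℝ) * Real.exp (lam * ℓ g) * t := by ring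
    have hle : p ((π g) v) ≤ (n : ℝ) * Real.exp (lam * ℓ g) * gauge (F i) v := by
      refine le_of_forall_pos_le_add fun ε hε => ?_
      set K : ℝ := (n : ℝ) * Real.exp (lam * ℓ g) with hK
      have hK0 : 0 ≤ K := by positivity
      have hstep := key (gauge (F i) v + ε / (K + 1))
        (lt_add_of_pos_right _ (by positivity))
      calc p ((π g) v) ≤ K * (gauge (F i) v + ε / (K + 1)) := hstep
        _ = K * gauge (F i) v + K * (ε / (K + 1)) := by ring
        _ ≤ K * gauge (F i) v + ε := by
            have h1 : K * (ε / (K + 1)) ≤ ε := by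
              rw [mul_div_assoc']
              rw [div_le_iff₀ (by positivity : (0:ℝ) < K + 1)]
              nlinarith
            linarith
    have hgn : 0 ≤ gauge (F i) v := gauge_nonneg _
    have : ⇑(gaugeSeminorm hbal hconv habs) = gauge (F i) := rfl
    rw [this]
    calc p ((π g) v) ≤ (n : ℝ) * Real.exp (lam * ℓ g) * gauge (F i) v := hle
      _ ≤ ((n : ℝ) + 1) * Real.exp (lam * ℓ g) * gauge (F i) v := by
          have := Real.exp_nonneg (lam * ℓ g)
          nlinarith

/-- Uniform exponential growth estimate for representations of
exponential type on a Fréchet space (Lemma 2.3 of the paper). -/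
theorem stmt0
    {E : Type*} [AddCommGroup E] [Module ℝ E] [UniformSpace E] [IsUniformAddGroup E]
    [ContinuousSMul ℝ E] [LocallyConvexSpace ℝ E] [CompleteSpace E]
    [TopologicalSpace.MetrizableSpace E]
    {G : Type*} [Group G] (ℓ : G → ℝ)
    (π : G →* (E →L[ℝ] E))
    (hπ : ∀ (v : E) (p : Seminorm ℝ E), Continuous p →
      ∃ lam > 0, ∃ M : ℝ, ∀ g : G, Real.exp (-lam * ℓ g) * p (π g v) ≤ M)
    (p : Seminorm ℝ E) (hp : Continuous p) :
    ∃ C > 0, ∃ lam > 0, ∃ q : Seminorm ℝ E, Continuous q ∧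
      ∀ (v : E) (g : G), p (π g v) ≤ C * Real.exp (lam * ℓ g) * q v := by
  have hbdd : ∀ v : E, ∃ lam : ℝ, 0 < lam ∧ ExpBdd ℓ π p lam v := by
    intro v
    obtain ⟨lam, hl, M, hM⟩ := hπ v p hp
    refine ⟨lam, hl, max M 0, le_max_right _ _, fun g => ?_⟩
    have h := hM g
    have hexp : (0:ℝ) < Real.exp (lam * ℓ g) := Real.exp_pos _
    rw [neg_mul, Real.exp_neg] at h
    have h2 := mul_le_mul_of_nonneg_left h hexp.le
    rw [← mul_assoc, mul_inv_cancel₀ hexp.ne', one_mul] at h2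
    have h3 : p ((π g) v) ≤ M * Real.exp (lam * ℓ g) := h2.trans_eq (mul_comm _ _)
    exact h3.trans (mul_le_mul_of_nonneg_right (le_max_left M 0) (Real.exp_nonneg _))
  by_cases hA : ∀ v : E, ∃ r : ℚ, 0 < (r : ℝ) ∧ ExpBdd ℓ π p (r : ℝ) v
  · refine stmt0_baire ℓ π p hp {x : ℝ | 0 < x ∧ ∃ r : ℚ, (r : ℝ) = x} ?_ (fun _ h => h.1) ?_
    · exact (Set.countable_range (fun r : ℚ => (r : ℝ))).mono
        (fun x hx => by obtain ⟨r, hr⟩ := hx.2; exact ⟨r, hr⟩)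
    · intro v
      obtain ⟨r, hr, hb⟩ := hA v
      exact ⟨(r : ℝ), ⟨hr, r, rfl⟩, hb⟩
  · push_neg at hA
    obtain ⟨v₀, hv₀⟩ := hA
    obtain ⟨lamstar, hlampos, hlam⟩ := hbdd v₀
    have huniq : ∀ ν : ℝ, 0 < ν → ExpBdd ℓ π p ν v₀ → ν = lamstar := by
      intro ν hν hb
      by_contra hne
      rcases lt_or_gt_of_ne hne with hlt | hgt
      · obtain ⟨ρ, h1, h2⟩ := exists_rat_btwn hlt
        exact hv₀ ρ (hν.trans h1) (hb.between hlam h1.le h2.le)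
      · obtain ⟨ρ, h1, h2⟩ := exists_rat_btwn hgt
        exact hv₀ ρ (hlampos.trans h1) (hlam.between hb h1.le h2.le)
    have hall : ∀ v : E, ExpBdd ℓ π p lamstar v := by
      intro v
      obtain ⟨l1, hl1, hb1⟩ := hbdd v
      obtain ⟨μ, hμ, hbμ⟩ := hbdd (v + v₀)
      obtain ⟨ν, hν, hbv, hbv₀⟩ := expBdd_pair hb1 hlam hbμ
      have hνpos : 0 < ν := lt_of_lt_of_le (lt_min hl1 hlampos) hν
      rwa [huniq ν hνpos hbv₀] at hbv
    refine stmt0_baire ℓ π p hp {lamstar} (Set.countable_singleton _) ?_ ?_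
    · intro lam hl
      rw [Set.mem_singleton_iff] at hl
      exact hl ▸ hlampos
    · exact fun v => ⟨lamstar, rfl, hall v⟩
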